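/- Let g ∈ L^∞(ℝ, ℂ). The spectrum of the Wiener–Hopf operator W(g), acting on the subspace L²((0,∞)) of L²(ℝ, ℂ), is contained in the closed convex hull of the essential range of g. -/

import Mathlib

open MeasureTheory Complex Filter Set
open scoped NNReal ENNReal

noncomputable section

/-- The space `L²(ℝ, ℂ)`. -/
abbrev L2Space := Lp ℂ 2 (volume : Measure ℝ)

/-- `R` is a two-sided inverse of `T` on the subspace `ran P` (the image of the
projection `P`, identified with `L²((0,∞))`), with range inside that subspace. -/
def IsInverseOn (P T R : L2Space →ₗ[ℂ] L2Space) : Prop :=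
  (∀ u : L2Space, P u = u → R (T u) = u ∧ T (R u) = u) ∧
  (∀ u : L2Space, P (R u) = R u)

/-- The essential range of `g : ℝ → ℂ`: the set of `z ∈ ℂ` such that for every
`ε > 0` the set `{x | |g x − z| < ε}` has positive Lebesgue measure. -/
def essentialRange (g : ℝ → ℂ) : Set ℂ :=
  {z : ℂ | ∀ ε : ℝ, 0 < ε → 0 < volume {x : ℝ | ‖g x - z‖ < ε}}

local notation "⟪" x ", " y "⟫" => @inner ℂ _ _ x y

/-- Abstract Lax–Milgram-type inverse construction in a complex Hilbert space. -/
theorem lax_milgram_aux {H : Type*} [NormedAddCommGroup H] [InnerProductSpace ℂ H]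
    [CompleteSpace H] (T : H →L[ℂ] H) (c : ℂ) (d : ℝ) (hd : 0 < d)
    (hco : ∀ u : H, d * ‖u‖ ^ 2 ≤ ((starRingEnd ℂ) c * ⟪u, T u⟫).re) :
    ∃ S : H →ₗ[ℂ] H, (∀ u, ‖S u‖ ≤ (‖c‖ / d) * ‖u‖) ∧ ∀ u, S (T u) = u ∧ T (S u) = u := by
  have hlow : ∀ u : H, ‖u‖ ≤ (‖c‖ / d) * ‖T u‖ := by
    intro u
    rcases eq_or_ne u 0 with rfl | hu
    · simp [mul_nonneg (div_nonneg (norm_nonneg c) hd.le) (norm_nonneg _)]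
    · have h1 : d * ‖u‖ ^ 2 ≤ ‖c‖ * (‖u‖ * ‖T u‖) := by
        calc d * ‖u‖ ^ 2 ≤ ((starRingEnd ℂ) c * ⟪u, T u⟫).re := hco u
          _ ≤ ‖(starRingEnd ℂ) c * ⟪u, T u⟫‖ := Complex.re_le_norm _
          _ = ‖c‖ * ‖⟪u, T u⟫‖ := by rw [norm_mul, RingHomIsometric.norm_map]
          _ ≤ ‖c‖ * (‖u‖ * ‖T u‖) := by
              gcongr; exact norm_inner_le_norm u (T u)
      have hu' : 0 < ‖u‖ := norm_pos_iff.mpr hu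
      rw [div_mul_eq_mul_div, le_div_iff₀ hd]
      nlinarith [norm_nonneg (T u), norm_nonneg c]
  have hinj : Function.Injective T := by
    intro a b hab
    have := hlow (a - b)
    rw [map_sub, hab, sub_self, norm_zero, mul_zero] at this
    exact sub_eq_zero.mp (norm_le_zero_iff.mp this)
  have hanti : AntilipschitzWith ⟨‖c‖ / d, div_nonneg (norm_nonneg c) hd.le⟩ T :=
    T.antilipschitz_of_bound hlow
  have hclosed : IsClosed (Set.range T) := hanti.isClosed_range T.uniformContinuous
  have hrange : LinearMap.range (T : H →ₗ[ℂ] H) = ⊤ := by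
    set K : Submodule ℂ H := LinearMap.range (T : H →ₗ[ℂ] H) with hKdef
    have hKc : IsClosed (K : Set H) := by
      have : (K : Set H) = Set.range T := by
        ext x; simp [hKdef, LinearMap.mem_range]
      rw [this]; exact hclosed
    haveI : CompleteSpace K := hKc.completeSpace_coe
    rw [← Submodule.orthogonal_eq_bot_iff, Submodule.eq_bot_iff]
    intro v hv
    have h0 : ⟪T v, v⟫ = 0 := hv (T v) ⟨v, rfl⟩
    have h1 : ⟪v, T v⟫ = 0 := by rw [← inner_conj_symm, h0, map_zero]
    have h2 := hco v
    rw [h1, mul_zero, Complex.zero_re] at h2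
    have h3 : ‖v‖ ^ 2 ≤ 0 := by nlinarith
    have h4 : ‖v‖ ^ 2 = 0 := le_antisymm h3 (sq_nonneg _)
    exact norm_eq_zero.mp (pow_eq_zero_iff two_ne_zero |>.mp h4)
  have hbij : Function.Bijective (T : H →ₗ[ℂ] H) :=
    ⟨hinj, LinearMap.range_eq_top.mp hrange⟩
  let E := LinearEquiv.ofBijective (T : H →ₗ[ℂ] H) hbij
  refine ⟨E.symm.toLinearMap, fun u => ?_, fun u => ⟨?_, ?_⟩⟩
  · have : T (E.symm u) = u := E.apply_symm_apply u
    calc ‖E.symm u‖ ≤ (‖c‖ / d) * ‖T (E.symm u)‖ := hlow _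
      _ = (‖c‖ / d) * ‖u‖ := by rw [this]
  · exact E.symm_apply_apply u
  · exact E.apply_symm_apply u

/-- Almost every value of a function lies in its essential range. -/
theorem ae_mem_essentialRange (g : ℝ → ℂ) (hg : AEStronglyMeasurable g volume) :
    ∀ᵐ x : ℝ ∂volume, g x ∈ essentialRange g := by
  set g₀ := hg.mk g with hg₀
  have heq : g =ᵐ[volume] g₀ := hg.ae_eq_mk
  have hmeq : ∀ (z : ℂ) (ε : ℝ), volume {x : ℝ | ‖g x - z‖ < ε}
      = volume {x : ℝ | ‖g₀ x - z‖ < ε} := by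
    intro z ε
    apply measure_congr
    filter_upwards [heq] with x hx
    show (‖g x - z‖ < ε) = (‖g₀ x - z‖ < ε); rw [hx]
  have key : ∀ z : ℂ, z ∉ essentialRange g →
      ∃ ε : ℝ, 0 < ε ∧ volume {x : ℝ | ‖g₀ x - z‖ < ε} = 0 := by
    intro z hz
    simp only [essentialRange, Set.mem_setOf_eq, not_forall] at hz
    obtain ⟨ε, hε, hv⟩ := hz
    exact ⟨ε, hε, by rw [← hmeq]; exact le_antisymm (not_lt.mp hv) zero_le⟩
  classical
  set U : Set ℂ := (essentialRange g)ᶜ with hU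
  by_cases hUe : U = ∅
  · have : ∀ x, g x ∈ essentialRange g := by
      intro x
      by_contra hx
      exact absurd (hU ▸ (Set.eq_empty_iff_forall_notMem.mp hUe (g x))) (fun h => h hx)
    exact Filter.Eventually.of_forall this
  · have hch : ∀ z : U, ∃ ε : ℝ, 0 < ε ∧ volume {x : ℝ | ‖g₀ x - (z : ℂ)‖ < ε} = 0 :=
      fun z => key z z.2
    choose ε hε hvol using hch
    obtain ⟨t, htc, htU⟩ := TopologicalSpace.isOpen_iUnion_countable
      (fun z : U => Metric.ball (z : ℂ) (ε z)) (fun z => Metric.isOpen_ball)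
    have hcover : U ⊆ ⋃ z ∈ t, Metric.ball (z : ℂ) (ε z) := by
      rw [htU]
      intro w hw
      exact Set.mem_iUnion.mpr ⟨⟨w, hw⟩, Metric.mem_ball_self (hε _)⟩
    have hnull : volume (g₀ ⁻¹' U) = 0 := by
      have hsub : g₀ ⁻¹' U ⊆ ⋃ z ∈ t, g₀ ⁻¹' (Metric.ball (z : ℂ) (ε z)) := by
        intro x hx
        rcases Set.mem_iUnion₂.mp (hcover hx) with ⟨z, hzt, hzb⟩
        exact Set.mem_iUnion₂.mpr ⟨z, hzt, hzb⟩
      refine measure_mono_null hsub ?_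
      refine (measure_biUnion_null_iff htc).mpr ?_
      intro z _
      have : g₀ ⁻¹' (Metric.ball (z : ℂ) (ε z)) = {x : ℝ | ‖g₀ x - (z : ℂ)‖ < ε z} := by
        ext x; simp [Metric.mem_ball, dist_eq_norm]
      rw [this]; exact hvol z
    have hae₀ : ∀ᵐ x : ℝ ∂volume, g₀ x ∈ essentialRange g := by
      rw [ae_iff]
      refine measure_mono_null ?_ hnull
      intro x hx
      exact hx
    filter_upwards [hae₀, heq] with x hx hgx
    rw [hgx]; exact hx

set_option maxHeartbeats 1000000 in
/-- Let `g ∈ L^∞(ℝ, ℂ)`.  The spectrum of the Wiener–Hopf operator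
`W(g) = P 𝓕⁻¹ M_g 𝓕 P`, acting on the subspace `L²((0,∞))` of `L²(ℝ, ℂ)` (the range
of the projection `P` of multiplication by the indicator of `(0,∞)`), is contained
in the closed convex hull of the essential range of `g`: every `z` outside that
closed convex hull lies in the resolvent set, i.e. `W(g) − z I` is invertible with a
bounded inverse on `L²((0,∞))`. -/
theorem wiener_hopf_spectrum_subset_convex_hull
    (g : ℝ → ℂ) (hg : MemLp g ⊤ (volume : Measure ℝ))
    (𝓕 : L2Space ≃ₗᵢ[ℂ] L2Space)
    (h𝓕 : ∀ (u : ℝ → ℂ) (_ : Integrable u (volume : Measure ℝ))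
      (hu2 : MemLp u 2 (volume : Measure ℝ)),
      (𝓕 (hu2.toLp u) : ℝ → ℂ) =ᵐ[volume]
        fun x : ℝ => (((2 * Real.pi : ℝ) ^ (-(1 : ℝ) / 2) : ℝ) : ℂ) *
          ∫ t : ℝ, u t * Complex.exp (-Complex.I * (x : ℂ) * (t : ℂ)))
    (Mg : L2Space →ₗ[ℂ] L2Space)
    (hMg : ∀ u : L2Space, (Mg u : ℝ → ℂ) =ᵐ[volume] fun x : ℝ => g x * u x)
    (P : L2Space →ₗ[ℂ] L2Space)
    (hP : ∀ u : L2Space, (P u : ℝ → ℂ) =ᵐ[volume]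
      fun x : ℝ => if 0 < x then u x else 0) :
    ∀ z : ℂ, z ∉ closure (convexHull ℝ (essentialRange g)) →
      ∃ R : L2Space →ₗ[ℂ] L2Space,
        (∃ c : ℝ, ∀ u : L2Space, ‖R u‖ ≤ c * ‖u‖) ∧
        IsInverseOn P
          (P ∘ₗ (𝓕.symm.toLinearEquiv.toLinearMap ∘ₗ Mg ∘ₗ 𝓕.toLinearEquiv.toLinearMap) ∘ₗ P
            - z • LinearMap.id) R := by
  intro z hz
  -- Separation
  obtain ⟨f, s, hfz, hfs⟩ := geometric_hahn_banach_point_closed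
    ((convex_convexHull ℝ (essentialRange g)).closure) isClosed_closure hz
  set c : ℂ := ⟨f 1, f Complex.I⟩ with hcdef
  have hfw : ∀ w : ℂ, f w = ((starRingEnd ℂ) c * w).re := by
    intro w
    have h1 : f w = w.re * f 1 + w.im * f Complex.I := by
      conv_lhs => rw [← Complex.re_add_im w]
      have h2 : (↑w.re + ↑w.im * Complex.I) = w.re • (1 : ℂ) + w.im • Complex.I := by
        simp [Complex.real_smul]
      rw [h2, f.map_add, f.map_smul, f.map_smul, smul_eq_mul, smul_eq_mul]
    rw [h1]
    simp only [hcdef, Complex.mul_re, Complex.conj_re, Complex.conj_im]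
    ring
  set d : ℝ := s - f z with hddef
  have hd : 0 < d := sub_pos.mpr hfz
  have haeb : ∀ᵐ x : ℝ ∂volume, d ≤ ((starRingEnd ℂ) c * (g x - z)).re := by
    filter_upwards [ae_mem_essentialRange g hg.1] with x hx
    have hmem : g x ∈ closure (convexHull ℝ (essentialRange g)) :=
      subset_closure (subset_convexHull ℝ _ hx)
    have h2 := hfs _ hmem
    have h3 : ((starRingEnd ℂ) c * (g x - z)).re = f (g x) - f z := by
      rw [mul_sub, Complex.sub_re, ← hfw, ← hfw]
    rw [h3]; unfold d; linarith
  -- Boundedness of the pieces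
  set M : ℝ := (eLpNorm g ⊤ volume).toReal with hMdef
  have hMtop : eLpNormEssSup g volume ≠ ⊤ := by
    rw [← eLpNorm_exponent_top]; exact hg.2.ne
  have hMae : ∀ᵐ x : ℝ ∂volume, ‖g x‖ ≤ M := by
    filter_upwards [ae_le_eLpNormEssSup (f := g) (μ := volume)] with x hx
    calc ‖g x‖ = ((‖g x‖₊ : ℝ≥0∞)).toReal := by simp
      _ ≤ M := by rw [hMdef, eLpNorm_exponent_top]; exact ENNReal.toReal_mono hMtop hx
  have hM0 : 0 ≤ M := ENNReal.toReal_nonneg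
  have hPle : ∀ u : L2Space, ‖P u‖ ≤ ‖u‖ := by
    intro u
    refine Lp.norm_le_norm_of_ae_le ?_
    filter_upwards [hP u] with x hx
    rw [hx]
    split <;> simp
  have hMgle : ∀ u : L2Space, ‖Mg u‖ ≤ M * ‖u‖ := by
    intro u
    calc ‖Mg u‖ ≤ ‖(M : ℂ) • u‖ := by
          refine Lp.norm_le_norm_of_ae_le ?_
          filter_upwards [hMg u, hMae, Lp.coeFn_smul ((M : ℝ) : ℂ) u] with x h1 h2 h3
          rw [h1, h3]
          simp only [Pi.smul_apply, smul_eq_mul, norm_mul, Complex.norm_real,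
            Real.norm_eq_abs, _root_.abs_of_nonneg hM0]
          exact mul_le_mul_of_nonneg_right h2 (norm_nonneg _)
      _ = M * ‖u‖ := by
          rw [norm_smul, Complex.norm_real, Real.norm_eq_abs, _root_.abs_of_nonneg hM0]
  -- Continuous versions
  let Pc : L2Space →L[ℂ] L2Space := P.mkContinuous 1 (fun u => by simpa using hPle u)
  set Tlin : L2Space →ₗ[ℂ] L2Space :=
    P ∘ₗ (𝓕.symm.toLinearEquiv.toLinearMap ∘ₗ Mg ∘ₗ 𝓕.toLinearEquiv.toLinearMap) ∘ₗ P
      - z • LinearMap.id with hTlin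
  have hTla : ∀ u : L2Space, Tlin u = P (𝓕.symm (Mg (𝓕 (P u)))) - z • u := fun u => rfl
  have hTbound : ∀ u : L2Space, ‖Tlin u‖ ≤ (M + ‖z‖) * ‖u‖ := by
    intro u
    rw [hTla]
    calc ‖P (𝓕.symm (Mg (𝓕 (P u)))) - z • u‖
        ≤ ‖P (𝓕.symm (Mg (𝓕 (P u))))‖ + ‖z • u‖ := norm_sub_le _ _
      _ ≤ M * ‖u‖ + ‖z‖ * ‖u‖ := by
          refine add_le_add ?_ (le_of_eq (norm_smul z u))
          calc ‖P (𝓕.symm (Mg (𝓕 (P u))))‖ ≤ ‖𝓕.symm (Mg (𝓕 (P u)))‖ := hPle _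
            _ = ‖Mg (𝓕 (P u))‖ := 𝓕.symm.norm_map _
            _ ≤ M * ‖𝓕 (P u)‖ := hMgle _
            _ = M * ‖P u‖ := by rw [𝓕.norm_map]
            _ ≤ M * ‖u‖ := by
                refine mul_le_mul_of_nonneg_left (hPle u) hM0
      _ = (M + ‖z‖) * ‖u‖ := by ring
  let Tc : L2Space →L[ℂ] L2Space := Tlin.mkContinuous (M + ‖z‖) hTbound
  have hTc' : ∀ u : L2Space, Tc u = Tlin u := fun u => rfl
  have hTc : ∀ u : L2Space, Tc u = P (𝓕.symm (Mg (𝓕 (P u)))) - z • u := hTla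
  -- P is idempotent
  have hPP : ∀ u : L2Space, P (P u) = P u := by
    intro u
    apply Lp.ext
    filter_upwards [hP (P u), hP u] with x h1 h2
    rcases lt_or_ge 0 x with hx | hx
    · rw [h1, if_pos hx]
    · rw [h1, if_neg (not_lt.mpr hx), h2, if_neg (not_lt.mpr hx)]
  -- the subspace V = ran P
  let V : Submodule ℂ L2Space := LinearMap.ker (P - LinearMap.id)
  have hVmem : ∀ u : L2Space, u ∈ V ↔ P u = u := by
    intro u
    simp [V, LinearMap.mem_ker, LinearMap.sub_apply, sub_eq_zero]
  have hVc : IsClosed (V : Set L2Space) := by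
    have h1 : (V : Set L2Space) =
        (fun u => (Pc - ContinuousLinearMap.id ℂ L2Space) u) ⁻¹' {0} := by
      ext u
      simp only [SetLike.mem_coe, hVmem, Set.mem_preimage, Set.mem_singleton_iff,
        ContinuousLinearMap.sub_apply, ContinuousLinearMap.id_apply, sub_eq_zero]
      exact Iff.rfl
    rw [h1]
    exact IsClosed.preimage (Pc - ContinuousLinearMap.id ℂ L2Space).continuous isClosed_singleton
  haveI : CompleteSpace V := hVc.completeSpace_coe
  -- Tc maps V to V
  have hTmaps : ∀ u : L2Space, u ∈ V → Tc u ∈ V := by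
    intro u hu
    have hu' : P u = u := (hVmem u).mp hu
    rw [hVmem, hTc, map_sub, hPP, LinearMap.map_smul, hu']
  let 𝒯 : V →L[ℂ] V :=
    (Tc.comp V.subtypeL).codRestrict V (fun x => hTmaps x x.2)
  -- P is self-adjoint
  have hPinner : ∀ a b : L2Space, (⟪a, P b⟫ : ℂ) = ⟪P a, b⟫ := by
    intro a b
    rw [L2.inner_def, L2.inner_def]
    apply integral_congr_ae
    filter_upwards [hP a, hP b] with x h1 h2
    simp only [RCLike.inner_apply, h1, h2]
    by_cases hx : 0 < x <;> simp [hx]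
  have hcw : ∀ a : ℂ, (starRingEnd ℂ) a * a = (((‖a‖ : ℝ) : ℂ)) ^ 2 := by
    intro a
    rw [mul_comm, Complex.mul_conj, Complex.normSq_eq_norm_sq]
    push_cast
    ring
  -- Coercivity
  have hco : ∀ u : V, d * ‖u‖ ^ 2 ≤ ((starRingEnd ℂ) c * ⟪u, 𝒯 u⟫).re := by
    rintro ⟨u, hu⟩
    have hu' : P u = u := (hVmem u).mp hu
    have h0 : (⟪(⟨u, hu⟩ : V), 𝒯 ⟨u, hu⟩⟫ : ℂ) = ⟪u, Tc u⟫ := rfl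
    rw [h0]
    set w : L2Space := 𝓕 u with hwdef
    have hinner : (⟪u, Tc u⟫ : ℂ) = ⟪w, Mg w⟫ - z * ⟪w, w⟫ := by
      rw [hTc, inner_sub_right, inner_smul_right]
      congr 1
      · rw [hPinner, hu', ← LinearIsometryEquiv.inner_map_map 𝓕 u,
          𝓕.apply_symm_apply, ← hwdef]
      · rw [← LinearIsometryEquiv.inner_map_map 𝓕 u u, ← hwdef]
    have hIww : Integrable (fun x : ℝ => (starRingEnd ℂ) ((w : ℝ → ℂ) x) * (w : ℝ → ℂ) x)
        volume := by
      have h := L2.integrable_inner (𝕜 := ℂ) w w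
      simpa only [RCLike.inner_apply'] using h
    have hIwg : Integrable
        (fun x : ℝ => (starRingEnd ℂ) ((w : ℝ → ℂ) x) * (g x * (w : ℝ → ℂ) x)) volume := by
      have h := L2.integrable_inner (𝕜 := ℂ) w (Mg w)
      simp only [RCLike.inner_apply'] at h
      exact h.congr (by filter_upwards [hMg w] with x hx; rw [hx])
    have hinn1 : (⟪w, Mg w⟫ : ℂ)
        = ∫ x : ℝ, (starRingEnd ℂ) ((w : ℝ → ℂ) x) * (g x * (w : ℝ → ℂ) x) := by
      rw [L2.inner_def]
      apply integral_congr_ae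
      filter_upwards [hMg w] with x hx
      simp only [RCLike.inner_apply', hx]
    have hinn2 : (⟪w, w⟫ : ℂ) = ∫ x : ℝ, (starRingEnd ℂ) ((w : ℝ → ℂ) x) * (w : ℝ → ℂ) x := by
      rw [L2.inner_def]
      simp only [RCLike.inner_apply']
    have hdiff : (⟪w, Mg w⟫ : ℂ) - z * ⟪w, w⟫
        = ∫ x : ℝ, ((starRingEnd ℂ) ((w : ℝ → ℂ) x) * (g x * (w : ℝ → ℂ) x)
            - z * ((starRingEnd ℂ) ((w : ℝ → ℂ) x) * (w : ℝ → ℂ) x)) := by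
      rw [hinn1, hinn2, ← integral_const_mul, ← integral_sub hIwg (hIww.const_mul z)]
    have hIbig : Integrable (fun x : ℝ =>
        (starRingEnd ℂ) c * ((starRingEnd ℂ) ((w : ℝ → ℂ) x) * (g x * (w : ℝ → ℂ) x)
          - z * ((starRingEnd ℂ) ((w : ℝ → ℂ) x) * (w : ℝ → ℂ) x))) volume :=
      (hIwg.sub (hIww.const_mul z)).const_mul _
    have hre : ((starRingEnd ℂ) c * (⟪w, Mg w⟫ - z * ⟪w, w⟫)).re
        = ∫ x : ℝ, ((starRingEnd ℂ) c * ((starRingEnd ℂ) ((w : ℝ → ℂ) x) * (g x * (w : ℝ → ℂ) x)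
            - z * ((starRingEnd ℂ) ((w : ℝ → ℂ) x) * (w : ℝ → ℂ) x))).re := by
      rw [hdiff, ← integral_const_mul]
      have h := integral_re hIbig
      simp only [RCLike.re_to_complex] at h
      exact h.symm
    have hpt : ∀ᵐ x : ℝ ∂volume, d * ‖(w : ℝ → ℂ) x‖ ^ 2
        ≤ ((starRingEnd ℂ) c * ((starRingEnd ℂ) ((w : ℝ → ℂ) x) * (g x * (w : ℝ → ℂ) x)
            - z * ((starRingEnd ℂ) ((w : ℝ → ℂ) x) * (w : ℝ → ℂ) x))).re := by
      filter_upwards [haeb] with x hx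
      have h1 : (starRingEnd ℂ) ((w : ℝ → ℂ) x) * (g x * (w : ℝ → ℂ) x)
          - z * ((starRingEnd ℂ) ((w : ℝ → ℂ) x) * (w : ℝ → ℂ) x)
          = (g x - z) * ((starRingEnd ℂ) ((w : ℝ → ℂ) x) * (w : ℝ → ℂ) x) := by ring
      rw [h1, hcw]
      have h2 : (starRingEnd ℂ) c * ((g x - z) * ((‖(w : ℝ → ℂ) x‖ : ℂ)) ^ 2)
          = ((‖(w : ℝ → ℂ) x‖ ^ 2 : ℝ) : ℂ) * ((starRingEnd ℂ) c * (g x - z)) := by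
        push_cast
        ring
      rw [h2, Complex.re_ofReal_mul]
      have h3 := mul_le_mul_of_nonneg_left hx (sq_nonneg ‖(w : ℝ → ℂ) x‖)
      linarith
    have hIφ : Integrable (fun x : ℝ => d * ‖(w : ℝ → ℂ) x‖ ^ 2) volume := by
      refine (hIww.re.const_mul d).congr (Eventually.of_forall fun x => ?_)
      simp only [hcw, ← Complex.ofReal_pow, RCLike.re_to_complex, Complex.ofReal_re]
    have hIre : Integrable (fun x : ℝ =>
        ((starRingEnd ℂ) c * ((starRingEnd ℂ) ((w : ℝ → ℂ) x) * (g x * (w : ℝ → ℂ) x)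
          - z * ((starRingEnd ℂ) ((w : ℝ → ℂ) x) * (w : ℝ → ℂ) x))).re) volume := by
      have h := hIbig.re
      simpa only [RCLike.re_to_complex] using h
    have hle : ∫ x : ℝ, d * ‖(w : ℝ → ℂ) x‖ ^ 2
        ≤ ∫ x : ℝ, ((starRingEnd ℂ) c * ((starRingEnd ℂ) ((w : ℝ → ℂ) x) * (g x * (w : ℝ → ℂ) x)
            - z * ((starRingEnd ℂ) ((w : ℝ → ℂ) x) * (w : ℝ → ℂ) x))).re :=
      integral_mono_ae hIφ hIre hpt
    have hφint : ∫ x : ℝ, ‖(w : ℝ → ℂ) x‖ ^ 2 = ‖w‖ ^ 2 := by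
      have h1 : RCLike.re (⟪w, w⟫ : ℂ) = ‖w‖ ^ 2 := inner_self_eq_norm_sq w
      rw [hinn2, ← integral_re hIww] at h1
      rw [← h1]
      apply integral_congr_ae
      refine Eventually.of_forall fun x => ?_
      simp only [hcw, ← Complex.ofReal_pow, RCLike.re_to_complex, Complex.ofReal_re]
    have hnormu : ‖(⟨u, hu⟩ : V)‖ = ‖u‖ := rfl
    have hnormw : ‖w‖ = ‖u‖ := by rw [hwdef]; exact 𝓕.norm_map u
    calc d * ‖(⟨u, hu⟩ : V)‖ ^ 2 = d * ‖w‖ ^ 2 := by rw [hnormu, hnormw]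
      _ = ∫ x : ℝ, d * ‖(w : ℝ → ℂ) x‖ ^ 2 := by rw [integral_const_mul, hφint]
      _ ≤ _ := hle
      _ = ((starRingEnd ℂ) c * ⟪u, Tc u⟫).re := by rw [hinner, hre]
  -- apply the abstract lemma
  obtain ⟨S, hSb, hSinv⟩ := lax_milgram_aux 𝒯 c d hd hco
  let Q : L2Space →ₗ[ℂ] V := LinearMap.codRestrict V P (fun u => (hVmem _).mpr (hPP u))
  have hQapp : ∀ u : L2Space, ((Q u : V) : L2Space) = P u := fun u => rfl
  have hRapp : ∀ u : L2Space, (V.subtype ∘ₗ S ∘ₗ Q) u = ((S (Q u) : V) : L2Space) :=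
    fun u => rfl
  have h𝒯app : ∀ v : V, ((𝒯 v : V) : L2Space) = Tc (v : L2Space) := fun v => rfl
  refine ⟨V.subtype ∘ₗ S ∘ₗ Q, ⟨‖c‖ / d, fun u => ?_⟩, ?_, ?_⟩
  · rw [hRapp, Submodule.norm_coe]
    calc ‖S (Q u)‖ ≤ (‖c‖ / d) * ‖Q u‖ := hSb _
      _ = (‖c‖ / d) * ‖P u‖ := by rw [← Submodule.norm_coe (Q u), hQapp]
      _ ≤ (‖c‖ / d) * ‖u‖ :=
          mul_le_mul_of_nonneg_left (hPle u) (div_nonneg (norm_nonneg c) hd.le)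
  · -- inverse property on the subspace
    intro u hu
    have huV : u ∈ V := (hVmem u).mpr hu
    constructor
    · -- R (T u) = u
      have hTu : Tlin u ∈ V := by rw [← hTc']; exact hTmaps u huV
      have hQT : Q (Tlin u) = 𝒯 ⟨u, huV⟩ := by
        apply Subtype.ext
        rw [hQapp, h𝒯app, hTc']
        exact (hVmem _).mp hTu
      rw [hRapp, hQT, (hSinv ⟨u, huV⟩).1]
    · -- T (R u) = u
      have hQu : Q u = ⟨u, huV⟩ := by
        apply Subtype.ext
        rw [hQapp]
        exact hu
      rw [hRapp, hQu, ← hTc', ← h𝒯app, (hSinv ⟨u, huV⟩).2]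
  · intro u
    rw [hRapp]
    exact (hVmem _).mp (S (Q u)).2
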